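/- Let b be an even positive integer and G = ⟨v₁, v₂, h | [v₁,h], [v₂,h], [v₁,v₂]h^{-b}⟩. Let φ : G → ℤ/2 be the homomorphism with φ(v₁) = φ(v₂) = 0 and φ(h) = 1 (well-defined since b is even). Then ker φ is isomorphic to ⟨w₁, w₂, k | [w₁,k], [w₂,k], [w₁,w₂]k^{-b/2}⟩, the fundamental group of M_T(b/2). -/

import Mathlib

/-- Relations of the fundamental group of `M_T(b)`:
generators `v₁ = 0`, `v₂ = 1`, `h = 2`; relations `[v₁,h]`, `[v₂,h]`, `[v₁,v₂]h^{-b}`. -/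
def relsT (b : ℤ) : Set (FreeGroup (Fin 3)) :=
  { .of 0 * .of 2 * (.of 0)⁻¹ * (.of 2)⁻¹,
    .of 1 * .of 2 * (.of 1)⁻¹ * (.of 2)⁻¹,
    .of 0 * .of 1 * (.of 0)⁻¹ * (.of 1)⁻¹ * (.of 2) ^ (-b) }

/-- Discrete Heisenberg-type group model. -/
@[ext] structure Hgp (c : ℤ) where
  x : ℤ
  y : ℤ
  z : ℤ

namespace Hgp
variable {c : ℤ}

instance : Mul (Hgp c) := ⟨fun a b => ⟨a.x + b.x, a.y + b.y, a.z + b.z + c * a.x * b.y⟩⟩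
instance : One (Hgp c) := ⟨⟨0, 0, 0⟩⟩
instance : Inv (Hgp c) := ⟨fun a => ⟨-a.x, -a.y, -a.z + c * a.x * a.y⟩⟩

@[simp] lemma mul_x (a b : Hgp c) : (a * b).x = a.x + b.x := rfl
@[simp] lemma mul_y (a b : Hgp c) : (a * b).y = a.y + b.y := rfl
@[simp] lemma mul_z (a b : Hgp c) : (a * b).z = a.z + b.z + c * a.x * b.y := rfl
@[simp] lemma one_x : (1 : Hgp c).x = 0 := rfl
@[simp] lemma one_y : (1 : Hgp c).y = 0 := rfl
@[simp] lemma one_z : (1 : Hgp c).z = 0 := rfl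
@[simp] lemma inv_x (a : Hgp c) : (a⁻¹).x = -a.x := rfl
@[simp] lemma inv_y (a : Hgp c) : (a⁻¹).y = -a.y := rfl
@[simp] lemma inv_z (a : Hgp c) : (a⁻¹).z = -a.z + c * a.x * a.y := rfl

instance : Group (Hgp c) where
  mul_assoc a b d := by ext <;> simp <;> ring
  one_mul a := by ext <;> simp
  mul_one a := by ext <;> simp
  inv_mul_cancel a := by ext <;> simp <;> ring

lemma V1_zpow (n : ℤ) : (⟨1, 0, 0⟩ : Hgp c) ^ n = ⟨n, 0, 0⟩ := by
  induction n using Int.induction_on with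
  | zero => rfl
  | succ k ih => rw [zpow_add_one, ih]; ext <;> simp
  | pred k ih => rw [zpow_sub_one, ih]; ext <;> simp <;> omega

lemma V2_zpow (n : ℤ) : (⟨0, 1, 0⟩ : Hgp c) ^ n = ⟨0, n, 0⟩ := by
  induction n using Int.induction_on with
  | zero => rfl
  | succ k ih => rw [zpow_add_one, ih]; ext <;> simp
  | pred k ih => rw [zpow_sub_one, ih]; ext <;> simp <;> omega

lemma H_zpow (n : ℤ) : (⟨0, 0, 1⟩ : Hgp c) ^ n = ⟨0, 0, n⟩ := by
  induction n using Int.induction_on with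
  | zero => rfl
  | succ k ih => rw [zpow_add_one, ih]; ext <;> simp
  | pred k ih => rw [zpow_sub_one, ih]; ext <;> simp <;> omega

end Hgp

section Swap
variable {G : Type*} [Group G] {a b h : G} {c : ℤ}

lemma inv_swap (hah : Commute a h) (hbh : Commute b h)
    (hba : b * a = a * b * h ^ (-c)) : b⁻¹ * a = a * b⁻¹ * h ^ c := by
  have h1 : a = b⁻¹ * (a * b * h ^ (-c)) := by rw [← hba]; group
  calc b⁻¹ * a = b⁻¹ * a * (b * h ^ (-c)) * (h ^ (-c))⁻¹ * b⁻¹ := by group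
    _ = b⁻¹ * (a * b * h ^ (-c)) * (h ^ (-c))⁻¹ * b⁻¹ := by group
    _ = a * (h ^ (-c))⁻¹ * b⁻¹ := by rw [← h1]
    _ = a * b⁻¹ * h ^ c := by
        rw [← zpow_neg, neg_neg, mul_assoc, mul_assoc, (hbh.zpow_right c).inv_left.eq]

lemma zpow_swap (hah : Commute a h) (hbh : Commute b h)
    (hba : b * a = a * b * h ^ (-c)) (y : ℤ) :
    b ^ y * a = a * b ^ y * h ^ (-(c * y)) := by
  induction y using Int.induction_on with
  | zero => simp
  | succ k ih =>
      calc b ^ ((k : ℤ) + 1) * a = b ^ (k : ℤ) * (b * a) := by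
            rw [zpow_add_one]; simp only [mul_assoc]
        _ = b ^ (k : ℤ) * a * (b * h ^ (-c)) := by rw [hba]; simp only [mul_assoc]
        _ = a * b ^ (k : ℤ) * h ^ (-(c * k)) * (b * h ^ (-c)) := by rw [ih]
        _ = a * b ^ (k : ℤ) * ((h ^ (-(c * k)) * b) * h ^ (-c)) := by
            simp only [mul_assoc]
        _ = a * b ^ (k : ℤ) * ((b * h ^ (-(c * k))) * h ^ (-c)) := by
            rw [(hbh.zpow_right (-(c * k))).symm.eq]
        _ = a * (b ^ (k : ℤ) * b) * (h ^ (-(c * k)) * h ^ (-c)) := by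
            simp only [mul_assoc]
        _ = a * b ^ ((k : ℤ) + 1) * h ^ (-(c * ((k : ℤ) + 1))) := by
            rw [← zpow_add_one, ← zpow_add]
            congr 2
            ring
  | pred k ih =>
      calc b ^ ((-k : ℤ) - 1) * a = b ^ (-k : ℤ) * (b⁻¹ * a) := by
            rw [zpow_sub_one]; simp only [mul_assoc]
        _ = b ^ (-k : ℤ) * a * (b⁻¹ * h ^ c) := by
            rw [inv_swap hah hbh hba]; simp only [mul_assoc]
        _ = a * b ^ (-k : ℤ) * h ^ (-(c * (-k : ℤ))) * (b⁻¹ * h ^ c) := by rw [ih]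
        _ = a * b ^ (-k : ℤ) * ((h ^ (-(c * (-k : ℤ))) * b⁻¹) * h ^ c) := by
            simp only [mul_assoc]
        _ = a * b ^ (-k : ℤ) * ((b⁻¹ * h ^ (-(c * (-k : ℤ)))) * h ^ c) := by
            rw [(hbh.zpow_right (-(c * (-k : ℤ)))).inv_left.symm.eq]
        _ = a * (b ^ (-k : ℤ) * b⁻¹) * (h ^ (-(c * (-k : ℤ))) * h ^ c) := by
            simp only [mul_assoc]
        _ = a * b ^ ((-k : ℤ) - 1) * h ^ (-(c * ((-k : ℤ) - 1))) := by
            rw [← zpow_sub_one, ← zpow_add]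
            congr 2
            ring

end Swap

section PG
variable (c : ℤ)

local notation "G" => PresentedGroup (relsT c)

lemma rel_eq_one {r : FreeGroup (Fin 3)} (hr : r ∈ relsT c) :
    PresentedGroup.mk (relsT c) r = 1 :=
  (QuotientGroup.eq_one_iff r).mpr (Subgroup.subset_normalClosure hr)

lemma mk_of (x : Fin 3) :
    PresentedGroup.mk (relsT c) (FreeGroup.of x) = PresentedGroup.of x := rfl

lemma commute_ah : Commute (PresentedGroup.of 0 : G) (PresentedGroup.of 2) := by
  have := rel_eq_one c (show _ ∈ relsT c from Or.inl rfl)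
  simp only [map_mul, map_inv, mk_of] at this
  exact commutatorElement_eq_one_iff_commute.mp this

lemma commute_bh : Commute (PresentedGroup.of 1 : G) (PresentedGroup.of 2) := by
  have := rel_eq_one c (show _ ∈ relsT c from Or.inr (Or.inl rfl))
  simp only [map_mul, map_inv, mk_of] at this
  exact commutatorElement_eq_one_iff_commute.mp this

lemma rel3 : (PresentedGroup.of 0 : G) * PresentedGroup.of 1 * (PresentedGroup.of 0)⁻¹ *
    (PresentedGroup.of 1)⁻¹ * (PresentedGroup.of 2) ^ (-c) = 1 := by
  have := rel_eq_one c (show _ ∈ relsT c from Or.inr (Or.inr rfl))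
  simpa only [map_mul, map_inv, map_zpow, mk_of] using this

lemma ba_swap : (PresentedGroup.of 1 : G) * PresentedGroup.of 0 =
    PresentedGroup.of 0 * PresentedGroup.of 1 * (PresentedGroup.of 2) ^ (-c) := by
  set a := (PresentedGroup.of 0 : G) with ha
  set b := (PresentedGroup.of 1 : G) with hb
  set h := (PresentedGroup.of 2 : G) with hh
  have hc : a * b * a⁻¹ * b⁻¹ = h ^ c := by
    calc a * b * a⁻¹ * b⁻¹ = (a * b * a⁻¹ * b⁻¹ * h ^ (-c)) * h ^ c := by group
      _ = h ^ c := by rw [rel3 c]; group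
  have hab : a * b = h ^ c * (b * a) := by
    calc a * b = (a * b * a⁻¹ * b⁻¹) * (b * a) := by group
      _ = h ^ c * (b * a) := by rw [hc]
  have Ca : h ^ (-c) * a = a * h ^ (-c) := (((commute_ah c).symm).zpow_left (-c)).eq
  have Cb : h ^ (-c) * b = b * h ^ (-c) := (((commute_bh c).symm).zpow_left (-c)).eq
  calc b * a = h ^ (-c) * (h ^ c * (b * a)) := by group
    _ = h ^ (-c) * (a * b) := by rw [← hab]
    _ = (h ^ (-c) * a) * b := by group
    _ = a * (h ^ (-c) * b) := by rw [Ca]; group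
    _ = a * b * h ^ (-c) := by rw [Cb]; group

lemma ainv_swap : (PresentedGroup.of 1 : G) * (PresentedGroup.of 0)⁻¹ =
    (PresentedGroup.of 0)⁻¹ * PresentedGroup.of 1 * (PresentedGroup.of 2) ^ (-(-c)) := by
  set a := (PresentedGroup.of 0 : G)
  set b := (PresentedGroup.of 1 : G)
  set h := (PresentedGroup.of 2 : G)
  have h1 : a * b = b * a * h ^ c := by
    show (PresentedGroup.of 0 : G) * PresentedGroup.of 1 =
      PresentedGroup.of 1 * PresentedGroup.of 0 * PresentedGroup.of 2 ^ c
    rw [ba_swap c]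
    group
  have h2 : a * b * a⁻¹ = b * (a * h ^ c * a⁻¹) := by rw [h1]; group
  have h3 : a * h ^ c * a⁻¹ = h ^ c := by
    show (PresentedGroup.of 0 : G) * PresentedGroup.of 2 ^ c * (PresentedGroup.of 0)⁻¹ =
      PresentedGroup.of 2 ^ c
    rw [((commute_ah c).zpow_right c).eq]; group
  rw [h3] at h2
  calc b * a⁻¹ = a⁻¹ * (a * b * a⁻¹) := by group
    _ = a⁻¹ * (b * h ^ c) := by rw [h2]
    _ = a⁻¹ * b * h ^ (-(-c)) := by rw [neg_neg]; group

lemma bpow_a (y : ℤ) : (PresentedGroup.of 1 : G) ^ y * PresentedGroup.of 0 =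
    PresentedGroup.of 0 * (PresentedGroup.of 1) ^ y * (PresentedGroup.of 2) ^ (-(c * y)) :=
  zpow_swap (commute_ah c) (commute_bh c) (ba_swap c) y

lemma bpow_ainv (y : ℤ) : (PresentedGroup.of 1 : G) ^ y * (PresentedGroup.of 0)⁻¹ =
    (PresentedGroup.of 0)⁻¹ * (PresentedGroup.of 1) ^ y * (PresentedGroup.of 2) ^ (c * y) := by
  have := zpow_swap (c := -c) ((commute_ah c).inv_left) (commute_bh c) (ainv_swap c) y
  rw [this]
  congr 1
  ring

lemma nf_mul (x0 y0 z0 : ℤ) (g : G) (t : ℤ)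
    (hg : (PresentedGroup.of 1 : G) ^ y0 * g =
      g * (PresentedGroup.of 1) ^ y0 * (PresentedGroup.of 2) ^ t)
    (hgh : Commute g (PresentedGroup.of 2 : G)) :
    (PresentedGroup.of 0 : G) ^ x0 * (PresentedGroup.of 1) ^ y0 * (PresentedGroup.of 2) ^ z0 * g
      = (PresentedGroup.of 0) ^ x0 * g * (PresentedGroup.of 1) ^ y0 *
        (PresentedGroup.of 2) ^ (z0 + t) := by
  set a := (PresentedGroup.of 0 : G)
  set b := (PresentedGroup.of 1 : G)
  set h := (PresentedGroup.of 2 : G)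
  calc a ^ x0 * b ^ y0 * h ^ z0 * g = a ^ x0 * (b ^ y0 * (h ^ z0 * g)) := by
        simp only [mul_assoc]
    _ = a ^ x0 * (b ^ y0 * (g * h ^ z0)) := by rw [(hgh.symm.zpow_left z0).eq]
    _ = a ^ x0 * ((b ^ y0 * g) * h ^ z0) := by simp only [mul_assoc]
    _ = a ^ x0 * ((g * b ^ y0 * h ^ t) * h ^ z0) := by rw [hg]
    _ = a ^ x0 * g * b ^ y0 * (h ^ t * h ^ z0) := by simp only [mul_assoc]
    _ = a ^ x0 * g * b ^ y0 * h ^ (z0 + t) := by rw [← zpow_add, add_comm]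

lemma nf_a (x0 y0 z0 : ℤ) :
    (PresentedGroup.of 0 : G) ^ x0 * (PresentedGroup.of 1) ^ y0 * (PresentedGroup.of 2) ^ z0 *
      PresentedGroup.of 0 = (PresentedGroup.of 0) ^ (x0 + 1) * (PresentedGroup.of 1) ^ y0 *
      (PresentedGroup.of 2) ^ (z0 + -(c * y0)) := by
  rw [nf_mul c x0 y0 z0 _ _ (bpow_a c y0) (commute_ah c), ← zpow_add_one]

lemma nf_ainv (x0 y0 z0 : ℤ) :
    (PresentedGroup.of 0 : G) ^ x0 * (PresentedGroup.of 1) ^ y0 * (PresentedGroup.of 2) ^ z0 *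
      (PresentedGroup.of 0)⁻¹ = (PresentedGroup.of 0) ^ (x0 - 1) * (PresentedGroup.of 1) ^ y0 *
      (PresentedGroup.of 2) ^ (z0 + c * y0) := by
  rw [nf_mul c x0 y0 z0 _ _ (bpow_ainv c y0) (commute_ah c).inv_left, ← zpow_sub_one]

lemma nf_b (x0 y0 z0 : ℤ) :
    (PresentedGroup.of 0 : G) ^ x0 * (PresentedGroup.of 1) ^ y0 * (PresentedGroup.of 2) ^ z0 *
      PresentedGroup.of 1 = (PresentedGroup.of 0) ^ x0 * (PresentedGroup.of 1) ^ (y0 + 1) *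
      (PresentedGroup.of 2) ^ z0 := by
  have h0 : (PresentedGroup.of 1 : G) ^ y0 * PresentedGroup.of 1 =
      PresentedGroup.of 1 * (PresentedGroup.of 1) ^ y0 * (PresentedGroup.of 2) ^ (0 : ℤ) := by
    rw [zpow_zero, mul_one, ← zpow_add_one, ← zpow_one_add, add_comm]
  rw [nf_mul c x0 y0 z0 _ _ h0 (commute_bh c), add_zero, mul_assoc (PresentedGroup.of 0 ^ x0),
    ← zpow_one_add, add_comm 1 y0]

lemma nf_binv (x0 y0 z0 : ℤ) :
    (PresentedGroup.of 0 : G) ^ x0 * (PresentedGroup.of 1) ^ y0 * (PresentedGroup.of 2) ^ z0 *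
      (PresentedGroup.of 1)⁻¹ = (PresentedGroup.of 0) ^ x0 * (PresentedGroup.of 1) ^ (y0 - 1) *
      (PresentedGroup.of 2) ^ z0 := by
  have e1 : (PresentedGroup.of 1 : G)⁻¹ * (PresentedGroup.of 1) ^ y0 =
      (PresentedGroup.of 1) ^ (y0 - 1) := by
    rw [← zpow_neg_one, ← zpow_add]
    congr 1
    ring
  have h0 : (PresentedGroup.of 1 : G) ^ y0 * (PresentedGroup.of 1)⁻¹ =
      (PresentedGroup.of 1)⁻¹ * (PresentedGroup.of 1) ^ y0 * (PresentedGroup.of 2) ^ (0 : ℤ) := by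
    rw [zpow_zero, mul_one, ← zpow_sub_one, e1]
  rw [nf_mul c x0 y0 z0 _ _ h0 (commute_bh c).inv_left, add_zero,
    mul_assoc (PresentedGroup.of 0 ^ x0), e1]

lemma nf_h (x0 y0 z0 : ℤ) :
    (PresentedGroup.of 0 : G) ^ x0 * (PresentedGroup.of 1) ^ y0 * (PresentedGroup.of 2) ^ z0 *
      PresentedGroup.of 2 = (PresentedGroup.of 0) ^ x0 * (PresentedGroup.of 1) ^ y0 *
      (PresentedGroup.of 2) ^ (z0 + 1) := by
  rw [mul_assoc, ← zpow_add_one]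

lemma nf_hinv (x0 y0 z0 : ℤ) :
    (PresentedGroup.of 0 : G) ^ x0 * (PresentedGroup.of 1) ^ y0 * (PresentedGroup.of 2) ^ z0 *
      (PresentedGroup.of 2)⁻¹ = (PresentedGroup.of 0) ^ x0 * (PresentedGroup.of 1) ^ y0 *
      (PresentedGroup.of 2) ^ (z0 - 1) := by
  rw [mul_assoc, ← zpow_sub_one]

lemma exists_nf (g : G) : ∃ x y z : ℤ,
    g = (PresentedGroup.of 0 : G) ^ x * (PresentedGroup.of 1) ^ y * (PresentedGroup.of 2) ^ z := by
  have hg : g ∈ Subgroup.closure (Set.range (PresentedGroup.of : Fin 3 → G)) := by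
    rw [PresentedGroup.closure_range_of]
    trivial
  induction hg using Subgroup.closure_induction_right with
  | one => exact ⟨0, 0, 0, by simp⟩
  | mul_right w hw u hu ih =>
      obtain ⟨x0, y0, z0, rfl⟩ := ih
      obtain ⟨i, rfl⟩ := hu
      fin_cases i <;> simp only [Fin.zero_eta, Fin.mk_one, Fin.reduceFinMk, Fin.isValue]
      · exact ⟨x0 + 1, y0, z0 + -(c * y0), nf_a c x0 y0 z0⟩
      · exact ⟨x0, y0 + 1, z0, nf_b c x0 y0 z0⟩
      · exact ⟨x0, y0, z0 + 1, nf_h c x0 y0 z0⟩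
  | mul_inv_cancel w hw u hu ih =>
      obtain ⟨x0, y0, z0, rfl⟩ := ih
      obtain ⟨i, rfl⟩ := hu
      fin_cases i <;> simp only [Fin.zero_eta, Fin.mk_one, Fin.reduceFinMk, Fin.isValue]
      · exact ⟨x0 - 1, y0, z0 + c * y0, nf_ainv c x0 y0 z0⟩
      · exact ⟨x0, y0 - 1, z0, nf_binv c x0 y0 z0⟩
      · exact ⟨x0, y0, z0 - 1, nf_hinv c x0 y0 z0⟩

def gensH : Fin 3 → Hgp c := ![⟨1, 0, 0⟩, ⟨0, 1, 0⟩, ⟨0, 0, 1⟩]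

lemma lift_rels : ∀ r ∈ relsT c, FreeGroup.lift (gensH c) r = 1 := by
  intro r hr
  simp only [relsT, Set.mem_insert_iff, Set.mem_singleton_iff] at hr
  rcases hr with rfl | rfl | rfl <;>
    simp only [map_mul, map_inv, map_zpow, FreeGroup.lift_apply_of, gensH,
      Matrix.cons_val_zero, Matrix.cons_val_one, Matrix.head_cons, Matrix.cons_val_two,
      Matrix.tail_cons, Hgp.H_zpow] <;>
    ext <;> simp <;> ring

def θ : G →* Hgp c := PresentedGroup.toGroup (lift_rels c)

lemma θ_of (i : Fin 3) : θ c (PresentedGroup.of i) = gensH c i :=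
  PresentedGroup.toGroup.of (lift_rels c)

lemma θ_surj : Function.Surjective (θ c) := by
  intro g
  refine ⟨(PresentedGroup.of 0 : G) ^ g.x * (PresentedGroup.of 1) ^ g.y *
    (PresentedGroup.of 2) ^ (g.z - c * g.x * g.y), ?_⟩
  simp only [map_mul, map_zpow, θ_of, gensH, Matrix.cons_val_zero, Matrix.cons_val_one,
    Matrix.head_cons, Matrix.cons_val_two, Matrix.tail_cons, Hgp.V1_zpow, Hgp.V2_zpow,
    Hgp.H_zpow]
  ext <;> simp <;> ring

lemma θ_inj : Function.Injective (θ c) := by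
  refine (injective_iff_map_eq_one (θ c)).mpr fun g hg => ?_
  obtain ⟨x, y, z, rfl⟩ := exists_nf c g
  simp only [map_mul, map_zpow, θ_of, gensH, Matrix.cons_val_zero, Matrix.cons_val_one,
    Matrix.head_cons, Matrix.cons_val_two, Matrix.tail_cons, Hgp.V1_zpow, Hgp.V2_zpow,
    Hgp.H_zpow] at hg
  rw [Hgp.ext_iff] at hg
  simp only [Hgp.mul_x, Hgp.mul_y, Hgp.mul_z, Hgp.one_x, Hgp.one_y, Hgp.one_z] at hg
  obtain ⟨hx, hy, hz⟩ := hg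
  have hx0 : x = 0 := by simpa using hx
  have hy0 : y = 0 := by simpa using hy
  subst hx0; subst hy0
  have hz0 : z = 0 := by simpa using hz
  subst hz0
  simp

noncomputable def pgIso : PresentedGroup (relsT c) ≃* Hgp c :=
  MulEquiv.ofBijective (θ c) ⟨θ_inj c, θ_surj c⟩

lemma pgIso_of (i : Fin 3) : pgIso c (PresentedGroup.of i) = gensH c i := θ_of c i

end PG

section Final

variable (b : ℕ)

noncomputable def ψmap (hb2 : ((b : ℕ) : ZMod 2) = 0) :
    Hgp (b : ℤ) →* Multiplicative (ZMod 2) where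
  toFun g := Multiplicative.ofAdd ((g.z : ZMod 2))
  map_one' := by simp
  map_mul' g1 g2 := by
    simp only [Hgp.mul_z, ← ofAdd_add]
    congr 1
    push_cast
    rw [hb2]
    ring

theorem ker_MT_cover_fibre' (hb : 0 < b) (heven : Even b)
    (φ : PresentedGroup (relsT b) →* Multiplicative (ZMod 2))
    (h1 : φ (PresentedGroup.of 0) = 1) (h2 : φ (PresentedGroup.of 1) = 1)
    (h3 : φ (PresentedGroup.of 2) = Multiplicative.ofAdd 1) :
    Nonempty (φ.ker ≃* PresentedGroup (relsT ((b : ℤ) / 2))) := by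
  obtain ⟨k, hk⟩ := heven
  set c2 : ℤ := (b : ℤ) / 2 with hc2
  have h2c : 2 * c2 = (b : ℤ) := by omega
  have hb2 : ((b : ℕ) : ZMod 2) = 0 := by
    have : ((b : ℤ) : ZMod 2) = 0 := by
      rw [ZMod.intCast_zmod_eq_zero_iff_dvd]
      omega
    push_cast at this
    exact this
  set e := pgIso (b : ℤ) with he
  set ψ := ψmap b hb2 with hψ
  have hφ : φ = ψ.comp (e : PresentedGroup (relsT (b : ℤ)) →* Hgp (b : ℤ)) := by
    apply PresentedGroup.ext
    intro i
    fin_cases i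
    · show φ (PresentedGroup.of 0) = ψ (e (PresentedGroup.of 0))
      rw [h1, pgIso_of, hψ]
      simp [ψmap, gensH]
    · show φ (PresentedGroup.of 1) = ψ (e (PresentedGroup.of 1))
      rw [h2, pgIso_of, hψ]
      simp [ψmap, gensH]
    · show φ (PresentedGroup.of 2) = ψ (e (PresentedGroup.of 2))
      rw [h3, pgIso_of, hψ]
      simp [ψmap, gensH]
  -- φ.ker ≃* ψ.ker
  have hker : φ.ker.map (e : PresentedGroup (relsT (b : ℤ)) →* Hgp (b : ℤ)) = ψ.ker := by
    rw [hφ, ← MonoidHom.comap_ker]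
    exact Subgroup.map_comap_eq_self_of_surjective e.surjective _
  have iso1 : φ.ker ≃* ψ.ker := (e.subgroupMap φ.ker).trans (MulEquiv.subgroupCongr hker)
  -- Hgp c2 ≃* ψ.ker
  have hτker : ∀ g : Hgp c2, (⟨g.x, g.y, 2 * g.z⟩ : Hgp (b : ℤ)) ∈ ψ.ker := by
    intro g
    show Multiplicative.ofAdd (((2 * g.z : ℤ) : ZMod 2)) = 1
    have : ((2 * g.z : ℤ) : ZMod 2) = 0 := by
      rw [ZMod.intCast_zmod_eq_zero_iff_dvd]
      exact Dvd.intro g.z rfl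
    rw [this, ofAdd_zero]
  let τ : Hgp c2 →* ψ.ker :=
  { toFun := fun g => ⟨⟨g.x, g.y, 2 * g.z⟩, hτker g⟩
    map_one' := by
      ext <;> simp
    map_mul' := fun g1 g2 => by
      ext <;> simp
      rw [← h2c]
      ring }
  have τbij : Function.Bijective τ := by
    constructor
    · intro g1 g2 hg
      have := Subtype.ext_iff.mp hg
      rw [Hgp.ext_iff] at this
      obtain ⟨e1, e2, e3⟩ := this
      ext
      · exact e1
      · exact e2
      · have e4 : 2 * g1.z = 2 * g2.z := e3
        omega
    · rintro ⟨g, hg⟩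
      have hg1 : Multiplicative.ofAdd ((g.z : ZMod 2)) = 1 := hg
      have hz : ((g.z : ℤ) : ZMod 2) = 0 := by
        rwa [← ofAdd_zero, Equiv.apply_eq_iff_eq] at hg1
      rw [ZMod.intCast_zmod_eq_zero_iff_dvd] at hz
      obtain ⟨m, hm⟩ := hz
      refine ⟨⟨g.x, g.y, m⟩, ?_⟩
      apply Subtype.ext
      show (⟨g.x, g.y, 2 * m⟩ : Hgp (b : ℤ)) = g
      ext <;> simp [hm]
  have iso2 : Hgp c2 ≃* ψ.ker := MulEquiv.ofBijective τ τbij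
  exact ⟨(iso1.trans iso2.symm).trans (pgIso c2).symm⟩

end Final

/-- For `b` even, the kernel of the epimorphism `π₁(M_T(b)) ↠ ℤ/2` with
`φ(v₁) = φ(v₂) = 0`, `φ(h) = 1` is the fundamental group of `M_T(b/2)`. -/
theorem ker_MT_cover_fibre (b : ℕ) (hb : 0 < b) (heven : Even b)
    (φ : PresentedGroup (relsT b) →* Multiplicative (ZMod 2))
    (h1 : φ (PresentedGroup.of 0) = 1) (h2 : φ (PresentedGroup.of 1) = 1)
    (h3 : φ (PresentedGroup.of 2) = Multiplicative.ofAdd 1) :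
    Nonempty (φ.ker ≃* PresentedGroup (relsT (b / 2))) := by
  exact ker_MT_cover_fibre' b hb heven φ h1 h2 h3
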